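/- For the two-dimensional nonabelian complex Lie algebra 𝔤 (with basis {y,z}, [y,z] = z), every linear endomorphism of 𝔤 is a tailed derivation; explicitly, the endomorphism with matrix (a c; b e) in the basis {y,z} is a tailed derivation with tail d determined by d_y = a and d_z = c. In particular TDer(𝔤) = 𝔤𝔩_2(ℂ) strictly contains Der(𝔤), which is two-dimensional. -/

import Mathlib

/-- The two-dimensional nonabelian complex Lie algebra on `ℂ × ℂ`, with basis
`y = (1,0)`, `z = (0,1)` and bracket `[y,z] = z`. -/
noncomputable def gb (u v : ℂ × ℂ) : ℂ × ℂ := (0, u.1 * v.2 - v.1 * u.2)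

/-- The space of derivations of the two-dimensional nonabelian Lie algebra. -/
noncomputable def derSub : Submodule ℂ ((ℂ × ℂ) →ₗ[ℂ] (ℂ × ℂ)) where
  carrier := {D | ∀ u v : ℂ × ℂ, D (gb u v) = gb (D u) v + gb u (D v)}
  add_mem' := by
    intro D T hD hT u v
    simp only [LinearMap.add_apply, hD u v, hT u v]
    ext <;> simp [gb] <;> ring
  zero_mem' := by
    intro u v
    ext <;> simp [gb]
  smul_mem' := by
    intro a D hD u v
    simp only [LinearMap.smul_apply, hD u v]
    ext <;> simp [gb] <;> ring


lemma decomp (D : (ℂ × ℂ) →ₗ[ℂ] (ℂ × ℂ)) (w : ℂ × ℂ) :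
    D w = w.1 • D (1, 0) + w.2 • D (0, 1) := by
  rw [← map_smul, ← map_smul, ← map_add]
  congr 1
  ext <;> simp

/-- surjectivity witness -/
noncomputable def Dbe (b e : ℂ) : (ℂ × ℂ) →ₗ[ℂ] (ℂ × ℂ) :=
  LinearMap.prod 0 (b • LinearMap.fst ℂ ℂ ℂ + e • LinearMap.snd ℂ ℂ ℂ)

lemma Dbe_mem (b e : ℂ) : Dbe b e ∈ derSub := by
  intro u v
  ext <;> simp [Dbe, gb] <;> ring

noncomputable def phi : ((ℂ × ℂ) →ₗ[ℂ] (ℂ × ℂ)) →ₗ[ℂ] ℂ × ℂ :=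
  LinearMap.prod
    ((LinearMap.snd ℂ ℂ ℂ).comp (LinearMap.applyₗ ((1 : ℂ), (0 : ℂ))))
    ((LinearMap.snd ℂ ℂ ℂ).comp (LinearMap.applyₗ ((0 : ℂ), (1 : ℂ))))

lemma der_a (D : (ℂ × ℂ) →ₗ[ℂ] (ℂ × ℂ)) (hD : D ∈ derSub) :
    (D (1, 0)).1 = 0 ∧ (D (0, 1)).1 = 0 := by
  have h := hD (1, 0) (0, 1)
  have hz : gb (1, 0) (0, 1) = ((0 : ℂ), (1 : ℂ)) := by simp [gb]
  rw [hz] at h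
  have h1 := congrArg Prod.fst h
  have h2 := congrArg Prod.snd h
  simp [gb] at h1 h2
  exact ⟨by linear_combination h2, h1⟩


/-- every linear endomorphism of the two-dimensional nonabelian Lie
algebra `𝔤` (basis `{y,z}`, `[y,z] = z`) is a tailed derivation, with tail `d`
determined by `d_y = a`, `d_z = c` where `D y = a y + b z`, `D z = c y + e z`;
so `TDer(𝔤) = 𝔤𝔩₂(ℂ)`, whereas `Der(𝔤)` is two-dimensional. -/
theorem tder_two_dim_nonabelian :
    (∀ D : (ℂ × ℂ) →ₗ[ℂ] (ℂ × ℂ), ∃ d : (ℂ × ℂ) →ₗ[ℂ] ℂ,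
      (∀ u v : ℂ × ℂ, D (gb u v) = gb (D u) v + gb u (D v) + d v • u - d u • v) ∧
      d (1, 0) = (D (1, 0)).1 ∧ d (0, 1) = (D (0, 1)).1) ∧
    Module.finrank ℂ derSub = 2 := by
  constructor
  · intro D
    refine ⟨(LinearMap.fst ℂ ℂ ℂ).comp D, ?_, by simp, by simp⟩
    intro u v
    have h1 := decomp D (gb u v)
    have h2 := decomp D u
    have h3 := decomp D v
    have h2' := congrArg Prod.fst h2
    have h3' := congrArg Prod.fst h3
    simp at h2' h3'
    ext
    · rw [h1, h2, h3]; simp [gb, h2', h3']; ring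
    · rw [h1, h2, h3]; simp [gb, h2', h3']; ring
  · have e : derSub ≃ₗ[ℂ] ℂ × ℂ := by
      apply LinearEquiv.ofBijective (phi.comp derSub.subtype)
      constructor
      · intro ⟨D, hD⟩ ⟨T, hT⟩ h
        simp only [LinearMap.comp_apply, phi, LinearMap.prod_apply, Submodule.subtype_apply] at h
        have h1 := congrArg Prod.fst h
        have h2 := congrArg Prod.snd h
        simp [LinearMap.applyₗ_apply_apply] at h1 h2
        obtain ⟨ha, hc⟩ := der_a D hD
        obtain ⟨ha', hc'⟩ := der_a T hT
        ext1
        apply LinearMap.ext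
        intro w
        rw [decomp D w, decomp T w]
        ext <;> simp [ha, hc, ha', hc', h1, h2]
      · intro ⟨b, e⟩
        refine ⟨⟨Dbe b e, Dbe_mem b e⟩, ?_⟩
        simp [phi, Dbe, LinearMap.applyₗ_apply_apply]
    rw [e.finrank_eq]
    simp
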